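/- Let V, E, C be finite index sets, D₁ : ℝ^V → ℝ^E and D̄₁ : ℝ^C → ℝ^E linear maps, D₂ := D̄₁ᵀ, D̄₂ := −D₁ᵀ, with D₂ D₁ = 0. Let R : ℝ^V → ℝ^C be a linear map and Q : ℝ^C × ℝ^E → ℝ^E a bilinear map satisfying, for every q ∈ ℝ^C: (i) antisymmetry, zᵀ Q(q, y) = −yᵀ Q(q, z) for all y, z ∈ ℝ^E; and (ii) the partial Leibniz rule II, Q(q, D̄₁ q) = ½ D₁ (Rᵀ (q ⊙ q)), where ⊙ is the entrywise product. Suppose differentiable curves h̃ : ℝ → ℝ^V, v : ℝ → ℝ^E, q : ℝ → ℝ^C and functions F : ℝ → ℝ^E, B : ℝ → ℝ^V satisfy q(t) ⊙ (R h̃(t)) = D₂ v(t) + f for a fixed f ∈ ℝ^C, h̃′ = −D̄₂ F(t), and v′ = −Q(q(t), F(t)) − D₁ B(t). Then the total potential enstrophy PE(t) := ½ Σ_c q_c(t)² (R h̃(t))_c is constant in t. -/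

import Mathlib

open Matrix

private lemma dp_aux {α β : Type*} [Fintype α] [Fintype β] (M : Matrix α β ℝ)
    (x : α → ℝ) (y : β → ℝ) : x ⬝ᵥ (M *ᵥ y) = (Mᵀ *ᵥ x) ⬝ᵥ y := by
  rw [Matrix.dotProduct_mulVec, Matrix.mulVec_transpose]

/-- Total potential enstrophy conservation: with `D₂ := D̄₁ᵀ`, `D̄₂ := −D₁ᵀ`,
`D₂ D₁ = 0`, a bilinear PV-flux wedge product `Q` satisfying antisymmetry
`zᵀ Q(q, y) = −yᵀ Q(q, z)` and the partial Leibniz rule II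
`Q(q, D̄₁q) = ½ D₁ (Rᵀ (q ⊙ q))`, if the curves satisfy
`q ⊙ (R h̃) = D₂ v + f`, `h̃′ = −D̄₂ F` and `v′ = −Q(q, F) − D₁ B`, then the total
potential enstrophy `PE(t) = ½ Σ_c q_c(t)² (R h̃(t))_c` is constant. -/
theorem discrete_potential_enstrophy_conservation
    {V E C : Type*} [Fintype V] [Fintype E] [Fintype C]
    (D₁ : Matrix E V ℝ) (Db₁ : Matrix E C ℝ)
    (hDD : Db₁ᵀ * D₁ = 0)
    (R : Matrix C V ℝ)
    (Q : (C → ℝ) →ₗ[ℝ] (E → ℝ) →ₗ[ℝ] (E → ℝ))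
    (hQanti : ∀ (q : C → ℝ) (y z : E → ℝ), z ⬝ᵥ Q q y = -(y ⬝ᵥ Q q z))
    (hQleib : ∀ q : C → ℝ,
      Q q (Db₁ *ᵥ q) = (1 / 2 : ℝ) • (D₁ *ᵥ (Rᵀ *ᵥ (q * q))))
    (ht : ℝ → V → ℝ) (v : ℝ → E → ℝ) (q : ℝ → C → ℝ)
    (hq : Differentiable ℝ q)
    (F : ℝ → E → ℝ) (B : ℝ → V → ℝ) (f : C → ℝ)
    (hpv : ∀ t, q t * (R *ᵥ ht t) = Db₁ᵀ *ᵥ v t + f)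
    (hh : ∀ t, HasDerivAt ht (-((-D₁ᵀ) *ᵥ F t)) t)
    (hv : ∀ t, HasDerivAt v (-Q (q t) (F t) - D₁ *ᵥ B t) t) :
    ∀ s t : ℝ,
      (1 / 2 : ℝ) * ∑ c, (q s c) ^ 2 * (R *ᵥ ht s) c
        = (1 / 2 : ℝ) * ∑ c, (q t c) ^ 2 * (R *ᵥ ht t) c := by
  have hder : ∀ t, HasDerivAt
      (fun s => (1 / 2 : ℝ) * ∑ c, (q s c) ^ 2 * (R *ᵥ ht s) c) 0 t := by
    intro t
    have hq' : HasDerivAt q (deriv q t) t := (hq t).hasDerivAt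
    have hqc : ∀ c, HasDerivAt (fun s => q s c) (deriv q t c) t :=
      fun c => hasDerivAt_pi.mp hq' c
    have hhc : ∀ w, HasDerivAt (fun s => ht s w) ((-((-D₁ᵀ) *ᵥ F t)) w) t :=
      fun w => hasDerivAt_pi.mp (hh t) w
    have hmc : ∀ c, HasDerivAt (fun s => (R *ᵥ ht s) c)
        ((R *ᵥ (-((-D₁ᵀ) *ᵥ F t))) c) t := by
      intro c
      have hsum : HasDerivAt (fun s => ∑ w, R c w * ht s w)
          (∑ w, R c w * (-((-D₁ᵀ) *ᵥ F t)) w) t :=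
        HasDerivAt.fun_sum (fun w _ => (hhc w).const_mul (R c w))
      simpa [Matrix.mulVec, dotProduct] using hsum
    set q' := deriv q t with hq'def
    set m := R *ᵥ ht t with hmdef
    set m' := R *ᵥ (-((-D₁ᵀ) *ᵥ F t)) with hm'def
    have hterm : ∀ c, HasDerivAt (fun s => (q s c) ^ 2 * (R *ᵥ ht s) c)
        ((2 * q t c * q' c) * m c + (q t c) ^ 2 * m' c) t := by
      intro c
      have h1 := ((hqc c).fun_pow 2).fun_mul (hmc c)
      refine h1.congr_deriv ?_
      push_cast
      rw [hmdef]
      ring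
    have hD : HasDerivAt (fun s => (1 / 2 : ℝ) * ∑ c, (q s c) ^ 2 * (R *ᵥ ht s) c)
        ((1 / 2 : ℝ) * ∑ c, ((2 * q t c * q' c) * m c + (q t c) ^ 2 * m' c)) t :=
      (HasDerivAt.fun_sum (fun c _ => hterm c)).const_mul (1 / 2 : ℝ)
    -- derivative of the PV relation
    have hL : HasDerivAt (fun s => q s * (R *ᵥ ht s)) (q' * m + q t * m') t := by
      rw [hasDerivAt_pi]
      intro c
      simpa using (hqc c).fun_mul (hmc c)
    have hRd : HasDerivAt (fun s => Db₁ᵀ *ᵥ v s + f)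
        (Db₁ᵀ *ᵥ (-Q (q t) (F t) - D₁ *ᵥ B t)) t := by
      rw [hasDerivAt_pi]
      intro c
      have hsum : HasDerivAt (fun s => (∑ e, Db₁ᵀ c e * v s e) + f c)
          (∑ e, Db₁ᵀ c e * (-Q (q t) (F t) - D₁ *ᵥ B t) e) t :=
        (HasDerivAt.fun_sum (fun e _ =>
          (hasDerivAt_pi.mp (hv t) e).const_mul (Db₁ᵀ c e))).add_const (f c)
      simpa [Matrix.mulVec, dotProduct] using hsum
    have hfun : (fun s => q s * (R *ᵥ ht s)) = (fun s => Db₁ᵀ *ᵥ v s + f) :=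
      funext hpv
    have key : q' * m + q t * m' = Db₁ᵀ *ᵥ (-Q (q t) (F t) - D₁ *ᵥ B t) :=
      (hfun ▸ hL).unique hRd
    -- scalar manipulations
    have S1 : q t ⬝ᵥ (q' * m) + q t ⬝ᵥ (q t * m')
        = q t ⬝ᵥ (Db₁ᵀ *ᵥ (-Q (q t) (F t) - D₁ *ᵥ B t)) := by
      rw [← dotProduct_add, key]
    have S2 : q t ⬝ᵥ (Db₁ᵀ *ᵥ (-Q (q t) (F t) - D₁ *ᵥ B t))
        = (Db₁ *ᵥ q t) ⬝ᵥ (-Q (q t) (F t) - D₁ *ᵥ B t) := by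
      rw [dp_aux]; simp
    have S4 : (Db₁ *ᵥ q t) ⬝ᵥ (D₁ *ᵥ B t) = 0 := by
      rw [dp_aux, Matrix.mulVec_mulVec]
      have h0 : D₁ᵀ * Db₁ = 0 := by
        have := congrArg Matrix.transpose hDD
        simpa [Matrix.transpose_mul] using this
      simp [h0]
    have S5 : (Db₁ *ᵥ q t) ⬝ᵥ (Q (q t) (F t))
        = -((1 / 2 : ℝ) * ((q t * q t) ⬝ᵥ m')) := by
      rw [hQanti (q t) (F t) (Db₁ *ᵥ q t), hQleib]
      rw [dotProduct_smul, smul_eq_mul, dp_aux D₁, dp_aux Rᵀ]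
      rw [Matrix.transpose_transpose]
      have hm'' : m' = R *ᵥ (D₁ᵀ *ᵥ F t) := by
        rw [hm'def, Matrix.neg_mulVec, neg_neg]
      rw [hm'', dotProduct_comm]
    have e1 : q t ⬝ᵥ (q t * m') = (q t * q t) ⬝ᵥ m' := by
      simp [dotProduct, Pi.mul_apply, mul_assoc]
    have S3 : (Db₁ *ᵥ q t) ⬝ᵥ (-Q (q t) (F t) - D₁ *ᵥ B t)
        = (1 / 2 : ℝ) * ((q t * q t) ⬝ᵥ m') := by
      rw [dotProduct_sub, dotProduct_neg, S5, S4]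
      ring
    have hmain : q t ⬝ᵥ (q' * m) = -(1 / 2 : ℝ) * ((q t * q t) ⬝ᵥ m') := by
      have := S1
      rw [S2, S3, e1] at this
      linarith
    have expand : (1 / 2 : ℝ) * ∑ c, ((2 * q t c * q' c) * m c + (q t c) ^ 2 * m' c)
        = q t ⬝ᵥ (q' * m) + (1 / 2 : ℝ) * ((q t * q t) ⬝ᵥ m') := by
      simp only [dotProduct, Pi.mul_apply, Finset.mul_sum, ← Finset.sum_add_distrib]
      apply Finset.sum_congr rfl
      intro c _
      ring
    have hzero : (1 / 2 : ℝ) * ∑ c, ((2 * q t c * q' c) * m c + (q t c) ^ 2 * m' c) = 0 := by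
      rw [expand, hmain]; ring
    exact hzero ▸ hD
  intro s t
  have hdiff : Differentiable ℝ (fun s => (1 / 2 : ℝ) * ∑ c, (q s c) ^ 2 * (R *ᵥ ht s) c) :=
    fun x => ((hder x).differentiableAt)
  have hd0 : ∀ x, deriv (fun s => (1 / 2 : ℝ) * ∑ c, (q s c) ^ 2 * (R *ᵥ ht s) c) x = 0 :=
    fun x => (hder x).deriv
  exact is_const_of_deriv_eq_zero hdiff hd0 s t
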